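/- Let T > 0, ω := 2π/T, let f : AddCircle T → ℂ be essentially bounded with Fourier coefficients a(k) := fourierCoeff f k, let λ ∈ ℂ, and let V : ℤ → ℂ be square-summable with Σ_{r∈ℤ} a(k−r)·V(r) − i·ω·k·V(k) = λ·V(k) for all k ∈ ℤ (i.e. (λ, V) is an eigenpair of 𝒜 − 𝒩). Then for every ε > 0 there exists j₀ ∈ ℕ such that for every m ≥ j₀ and every integer k′ with |k′| ≤ m − j₀: Σ_{i=−m}^{m} | Σ_{r=−m}^{m} a(i−r)·V(r+k′) − (λ + i·ω·(i+k′))·V(i+k′) |² < ε². That is, the m-truncations of the shifted eigenvectors are ε-approximate eigenvectors, with eigenvalues λ + iωk′, of the finite (2m+1)×(2m+1) truncated harmonic matrix 𝒜_m − 𝒩_m. -/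

import Mathlib

open MeasureTheory
open scoped ENNReal NNReal

open Filter Topology AddCircle in
/-- Multiplier bound: convolution with the Fourier coefficients of an `L^∞` function is a
bounded operator on `ℓ²(ℤ)`, with norm at most `‖f‖_∞`. -/
private theorem multiplier_bound {T : ℝ} [hT : Fact (0 < T)] (f : AddCircle T → ℂ)
    (hf : MemLp f ⊤ AddCircle.haarAddCircle) (w : ℤ → ℂ)
    (hw : Summable fun r => ‖w r‖ ^ 2) :
    ∃ u : ℤ → ℂ, (∀ j, HasSum (fun r => fourierCoeff f (j - r) * w r) (u j)) ∧
      (Summable fun j => ‖u j‖ ^ 2) ∧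
      ∑' j, ‖u j‖ ^ 2 ≤ (eLpNorm f ⊤ AddCircle.haarAddCircle).toReal ^ 2 * ∑' r, ‖w r‖ ^ 2 := by
  classical
  set μ := AddCircle.haarAddCircle (T := T) with hμ
  set C := (eLpNorm f ⊤ μ).toReal with hC
  have hCnn : 0 ≤ C := ENNReal.toReal_nonneg
  have hfm : AEStronglyMeasurable f μ := hf.1
  have hftop : eLpNorm f ⊤ μ ≠ ⊤ := hf.2.ne
  have hrpow : ∀ x : ℝ, x ^ ((2:ℝ≥0∞)).toReal = x ^ 2 := by
    intro x
    rw [ENNReal.toReal_ofNat, show ((2:ℝ)) = ((2:ℕ):ℝ) by norm_num, Real.rpow_natCast]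
  -- norm of fourier is 1
  have hnf : ∀ (n : ℤ) (x : AddCircle T), ‖fourier n x‖ = 1 := by
    intro n x; rw [fourier_apply]; exact Circle.norm_coe _
  -- f ∈ L²
  have hf2 : MemLp f 2 μ := hf.mono_exponent le_top
  have hfI : Integrable f μ := memLp_one_iff_integrable.mp (hf.mono_exponent le_top)
  -- a.e. bound on f
  have hCae : ∀ᵐ t ∂μ, ‖f t‖ ≤ C := by
    filter_upwards [ae_le_eLpNormEssSup (f := f) (μ := μ)] with t ht
    have h2 : (‖f t‖₊ : ℝ≥0∞) ≤ eLpNorm f ⊤ μ := by rwa [eLpNorm_exponent_top]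
    have := ENNReal.toReal_mono hftop h2
    simpa [hC] using this
  -- the ℓ² element W and its L² realization g
  have hmw : Memℓp w 2 := memℓp_gen (p := 2) (by simpa only [hrpow] using hw)
  set W : lp (fun _ : ℤ => ℂ) 2 := ⟨w, hmw⟩ with hW
  set g2 : Lp ℂ 2 μ := fourierBasis.repr.symm W with hg2
  have hg2c : ∀ i : ℤ, fourierCoeff (g2 : AddCircle T → ℂ) i = w i := by
    intro i
    rw [← fourierBasis_repr, hg2, LinearIsometryEquiv.apply_symm_apply]
  set g : AddCircle T → ℂ := (g2 : AddCircle T → ℂ) with hg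
  have hgmem : MemLp g 2 μ := Lp.memLp g2
  have hgI : Integrable g μ := memLp_one_iff_integrable.mp (hgmem.mono_exponent (by norm_num))
  -- the product u = f * g
  set u : AddCircle T → ℂ := fun t => f t * g t with hu
  have hu2 : MemLp u 2 μ := by
    have := MemLp.smul (p := ⊤) (q := 2) (r := 2) hgmem hf
    exact this
  have huI : Integrable u μ := memLp_one_iff_integrable.mp (hu2.mono_exponent (by norm_num))
  -- integrability of fourier-twisted integrands
  have hint : ∀ (h : AddCircle T → ℂ), Integrable h μ → ∀ n : ℤ,
      Integrable (fun t => fourier n t • h t) μ := by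
    intro h hh n
    refine Integrable.bdd_mul (c := 1) hh ((map_continuous (fourier n)).aestronglyMeasurable) (Filter.Eventually.of_forall ?_)
    intro x; rw [hnf]
  -- norm bound for Fourier coefficients by L¹ norm
  have hcoeff_le : ∀ (h : AddCircle T → ℂ), ‖fourierCoeff h 0‖ ≤ 0 → True := fun _ _ => trivial
  have hcoeffL1 : ∀ (h : AddCircle T → ℂ) (n : ℤ), Integrable h μ →
      ‖fourierCoeff h n‖ ≤ (eLpNorm h 1 μ).toReal := by
    intro h n hh
    have h1 : ‖fourierCoeff h n‖ ≤ ∫ t, ‖fourier (-n) t • h t‖ ∂μ :=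
      norm_integral_le_integral_norm _
    have h2 : (∫ t, ‖fourier (-n) t • h t‖ ∂μ) = ∫ t, ‖h t‖ ∂μ := by
      congr 1; funext t; rw [norm_smul, hnf, one_mul]
    have h3 : ENNReal.ofReal (∫ t, ‖h t‖ ∂μ) = ∫⁻ t, ‖h t‖ₑ ∂μ :=
      ofReal_integral_norm_eq_lintegral_enorm hh
    have h4 : (∫ t, ‖h t‖ ∂μ) = (eLpNorm h 1 μ).toReal := by
      rw [eLpNorm_one_eq_lintegral_enorm, ← h3,
        ENNReal.toReal_ofReal (integral_nonneg fun t => norm_nonneg _)]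
    rw [← h4]; rw [h2] at h1; exact h1
  -- the coefficients of u
  refine ⟨fun j => fourierCoeff u j, ?_, ?_, ?_⟩
  · -- HasSum
    intro j
    have hL2 : HasSum (fun i : ℤ => w i • fourierLp 2 i) g2 := by
      have := hasSum_fourier_series_L2 (T := T) g2
      convert this using 3 with i
      exact (hg2c i).symm
    set P : Finset ℤ → Lp ℂ 2 μ := fun s => ∑ i ∈ s, w i • fourierLp 2 i with hP
    set q : Finset ℤ → AddCircle T → ℂ := fun s t => ∑ i ∈ s, w i * fourier i t with hq
    have hPq : ∀ s : Finset ℤ, ((P s : Lp ℂ 2 μ) : AddCircle T → ℂ) =ᶠ[ae μ] q s := by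
      intro s
      induction s using Finset.induction_on with
      | empty => simpa [hP, hq, Pi.zero_def] using Lp.coeFn_zero (E := ℂ) (p := 2) (μ := μ)
      | insert _ _ hx ih =>
        rename_i n s'
        have hPeq : P (insert n s') = w n • fourierLp 2 n + P s' := Finset.sum_insert hx
        have hqeq : q (insert n s') = fun t => w n * fourier n t + q s' t := by
          funext t; exact Finset.sum_insert hx
        rw [hPeq, hqeq]
        filter_upwards [Lp.coeFn_add (w n • fourierLp 2 n) (P s'),
          Lp.coeFn_smul (w n) (fourierLp (T := T) 2 n), coeFn_fourierLp (T := T) 2 n, ih]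
          with t ht1 ht2 ht3 ht4
        rw [ht1]
        simp only [Pi.add_apply]
        rw [ht2]
        simp only [Pi.smul_apply, smul_eq_mul]
        rw [ht3, ht4]
    have hqcont : ∀ s : Finset ℤ, Continuous (q s) := by
      intro s
      exact continuous_finset_sum s fun i _ => continuous_const.mul (map_continuous (fourier i))
    have hq2 : ∀ s : Finset ℤ, MemLp (q s) 2 μ := by
      intro s
      refine (memLp_top_of_bound ((hqcont s).aestronglyMeasurable) (∑ i ∈ s, ‖w i‖)
        (Filter.Eventually.of_forall fun t => ?_)).mono_exponent le_top
      calc ‖q s t‖ ≤ ∑ i ∈ s, ‖w i * fourier i t‖ := norm_sum_le _ _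
        _ = ∑ i ∈ s, ‖w i‖ := by
            refine Finset.sum_congr rfl fun i _ => ?_
            rw [norm_mul, hnf, mul_one]
    have hqI : ∀ s : Finset ℤ, Integrable (fun t => f t * q s t) μ := by
      intro s
      have : MemLp (fun t => f t * q s t) 2 μ := by
        have := MemLp.smul (p := ⊤) (q := 2) (r := 2) (hq2 s) hf
        exact this
      exact memLp_one_iff_integrable.mp (this.mono_exponent (by norm_num))
    have hqc : ∀ s : Finset ℤ, fourierCoeff (fun t => f t * q s t) j
        = ∑ i ∈ s, fourierCoeff f (j - i) * w i := by
      intro s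
      have hfun : (fun t => fourier (-j) t • (f t * q s t))
          = fun t => ∑ i ∈ s, w i • (fourier (-(j - i)) t • f t) := by
        funext t
        simp only [hq, Finset.mul_sum, Finset.smul_sum, smul_eq_mul]
        refine Finset.sum_congr rfl fun i _ => ?_
        have : fourier (-j) t * fourier i t = fourier (-(j - i)) t := by
          rw [← fourier_add]; congr 1; ring
        calc fourier (-j) t * (f t * (w i * fourier i t))
            = w i * ((fourier (-j) t * fourier i t) * f t) := by ring
          _ = w i * (fourier (-(j - i)) t * f t) := by rw [this]
      have hstart : fourierCoeff (fun t => f t * q s t) j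
          = ∫ t, fourier (-j) t • (f t * q s t) ∂μ := rfl
      rw [hstart, hfun, integral_finset_sum]
      · refine Finset.sum_congr rfl fun i _ => ?_
        rw [integral_smul,
          show (∫ t, fourier (-(j - i)) t • f t ∂μ) = fourierCoeff f (j - i) from rfl,
          smul_eq_mul, mul_comm]
      · intro i _
        exact ((hint f hfI (-(j - i)))).smul (w i)
    have key : ∀ s : Finset ℤ, ‖fourierCoeff u j - ∑ i ∈ s, fourierCoeff f (j - i) * w i‖
        ≤ C * ‖g2 - P s‖ := by
      intro s
      rw [← hqc s]
      set d : AddCircle T → ℂ := fun t => g t - q s t with hd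
      have hd2 : MemLp d 2 μ := hgmem.sub (hq2 s)
      have hdI : Integrable d μ := memLp_one_iff_integrable.mp (hd2.mono_exponent (by norm_num))
      have hfdI : Integrable (fun t => f t * d t) μ := by
        have : MemLp (fun t => f t * d t) 2 μ := by
          have := MemLp.smul (p := ⊤) (q := 2) (r := 2) hd2 hf
          exact this
        exact memLp_one_iff_integrable.mp (this.mono_exponent (by norm_num))
      have hsub : fourierCoeff u j - fourierCoeff (fun t => f t * q s t) j
          = fourierCoeff (fun t => f t * d t) j := by
        rw [show fourierCoeff u j = ∫ t, fourier (-j) t • u t ∂μ from rfl,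
          show fourierCoeff (fun t => f t * q s t) j
            = ∫ t, fourier (-j) t • (f t * q s t) ∂μ from rfl,
          show fourierCoeff (fun t => f t * d t) j
            = ∫ t, fourier (-j) t • (f t * d t) ∂μ from rfl,
          ← integral_sub (hint u huI (-j)) (hint _ (hqI s) (-j))]
        congr 1; funext t
        simp only [hd, hu, smul_eq_mul]
        ring
      rw [hsub]
      have h1 : ‖fourierCoeff (fun t => f t * d t) j‖ ≤ (eLpNorm (fun t => f t * d t) 1 μ).toReal :=
        hcoeffL1 _ j hfdI
      have h2 : eLpNorm (fun t => f t * d t) 1 μ ≤ eLpNorm f ⊤ μ * eLpNorm d 1 μ := by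
        have := eLpNorm_smul_le_mul_eLpNorm (p := ⊤) (q := 1) (r := 1)
          hd2.1 hfm
        exact this
      have h3 : eLpNorm d 1 μ ≤ eLpNorm d 2 μ :=
        eLpNorm_le_eLpNorm_of_exponent_le (by norm_num) hd2.1
      have h4 : eLpNorm (fun t => f t * d t) 1 μ ≤ eLpNorm f ⊤ μ * eLpNorm d 2 μ :=
        h2.trans (mul_le_mul_right h3 _)
      have hfin : eLpNorm f ⊤ μ * eLpNorm d 2 μ ≠ ⊤ :=
        ENNReal.mul_ne_top hftop hd2.2.ne
      have h5 : (eLpNorm (fun t => f t * d t) 1 μ).toReal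
          ≤ (eLpNorm f ⊤ μ * eLpNorm d 2 μ).toReal := ENNReal.toReal_mono hfin h4
      have h6 : (eLpNorm f ⊤ μ * eLpNorm d 2 μ).toReal = C * (eLpNorm d 2 μ).toReal := by
        rw [ENNReal.toReal_mul]
      have h7 : (eLpNorm d 2 μ).toReal = ‖g2 - P s‖ := by
        rw [Lp.norm_def]
        congr 1
        apply eLpNorm_congr_ae
        filter_upwards [Lp.coeFn_sub g2 (P s), hPq s] with t ht1 ht2
        rw [ht1]
        simp only [Pi.sub_apply, hd]
        rw [ht2]
      calc ‖fourierCoeff (fun t => f t * d t) j‖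
          ≤ (eLpNorm (fun t => f t * d t) 1 μ).toReal := h1
        _ ≤ (eLpNorm f ⊤ μ * eLpNorm d 2 μ).toReal := h5
        _ = C * ‖g2 - P s‖ := by rw [h6, h7]
    -- conclude HasSum by squeezing
    rw [HasSum, tendsto_iff_dist_tendsto_zero]
    have hb : ∀ s : Finset ℤ, dist (∑ i ∈ s, fourierCoeff f (j - i) * w i) (fourierCoeff u j)
        ≤ C * dist (P s) g2 := by
      intro s
      rw [dist_eq_norm, dist_eq_norm]
      have := key s
      rw [norm_sub_rev (fourierCoeff u j)] at this
      rw [norm_sub_rev g2] at this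
      exact this
    have hzero : Tendsto (fun s : Finset ℤ => C * dist (P s) g2) atTop (𝓝 0) := by
      have := (tendsto_iff_dist_tendsto_zero.mp hL2)
      have h := this.const_mul C
      simpa using h
    exact squeeze_zero (fun s => dist_nonneg) hb hzero
  · -- summability
    set U := hu2.toLp u with hU
    have hUc : ∀ i : ℤ, fourierCoeff (U : AddCircle T → ℂ) i = fourierCoeff u i := by
      intro i
      apply integral_congr_ae
      filter_upwards [hu2.coeFn_toLp] with t ht
      rw [ht]
    have hmem := lp.memℓp (fourierBasis.repr U)
    rw [memℓp_gen_iff (by norm_num)] at hmem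
    have : Summable fun i : ℤ => ‖fourierCoeff u i‖ ^ 2 := by
      have h := hmem
      simp only [hrpow, fourierBasis_repr, hUc] at h
      exact h
    exact this
  · -- Parseval bound
    set U := hu2.toLp u with hU
    have hUc : ∀ i : ℤ, fourierCoeff (U : AddCircle T → ℂ) i = fourierCoeff u i := by
      intro i
      apply integral_congr_ae
      filter_upwards [hu2.coeFn_toLp] with t ht
      rw [ht]
    have hpars : ∑' i : ℤ, ‖fourierCoeff u i‖ ^ 2 = ∫ t, ‖u t‖ ^ 2 ∂μ := by
      have := tsum_sq_fourierCoeff (T := T) U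
      simp only [hUc] at this
      rw [this]
      apply integral_congr_ae
      filter_upwards [hu2.coeFn_toLp] with t ht
      rw [ht]
    have hparsg : ∑' r : ℤ, ‖w r‖ ^ 2 = ∫ t, ‖g t‖ ^ 2 ∂μ := by
      have := tsum_sq_fourierCoeff (T := T) g2
      simp only [← hg, hg2c] at this
      exact this
    have hgint : Integrable (fun t => ‖g t‖ ^ 2) μ := by
      have := hgmem.integrable_norm_rpow (by norm_num) (by norm_num)
      simpa only [hrpow] using this
    have hle : ∫ t, ‖u t‖ ^ 2 ∂μ ≤ C ^ 2 * ∫ t, ‖g t‖ ^ 2 ∂μ := by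
      rw [← integral_const_mul]
      apply integral_mono_of_nonneg
      · exact Filter.Eventually.of_forall fun t => sq_nonneg _
      · exact hgint.const_mul _
      · filter_upwards [hCae] with t ht
        have : ‖u t‖ = ‖f t‖ * ‖g t‖ := by rw [hu]; exact norm_mul _ _
        rw [this, mul_pow]
        have h1 : ‖f t‖ ^ 2 ≤ C ^ 2 := by
          apply sq_le_sq'
          · nlinarith [norm_nonneg (f t)]
          · exact ht
        nlinarith [sq_nonneg (‖g t‖), norm_nonneg (g t)]
    rw [hpars, hparsg]
    exact hle

open Filter Topology AddCircle in
/-- `m`-truncations of the (shifted) eigenvectors of the harmonic operator `𝒜 − 𝒩` are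
`ε`-approximate eigenvectors of the finite `(2m+1)×(2m+1)` truncated harmonic matrix
`𝒜_m − 𝒩_m`, with eigenvalues `λ + iωk′`, provided `|k′| ≤ m − j₀` with `j₀` large enough. -/
theorem truncation_approximate_eigenvectors
    (T : ℝ) [hT : Fact (0 < T)] (ω : ℝ) (hω : ω = 2 * Real.pi / T)
    (f : AddCircle T → ℂ) (hf : MemLp f ⊤ AddCircle.haarAddCircle)
    (lam : ℂ) (V : ℤ → ℂ) (hV2 : Summable fun k => ‖V k‖ ^ 2)
    (heig : ∀ k : ℤ, (∑' r : ℤ, fourierCoeff f (k - r) * V r)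
      - Complex.I * ω * k * V k = lam * V k) :
    ∀ ε > (0 : ℝ), ∃ j₀ : ℕ, ∀ m : ℕ, j₀ ≤ m → ∀ k' : ℤ, |k'| ≤ (m : ℤ) - (j₀ : ℤ) →
      ∑ i ∈ Finset.Icc (-(m : ℤ)) (m : ℤ),
        ‖(∑ r ∈ Finset.Icc (-(m : ℤ)) (m : ℤ), fourierCoeff f (i - r) * V (r + k'))
          - (lam + Complex.I * ω * (i + k')) * V (i + k')‖ ^ 2 < ε ^ 2 := by
  classical
  intro ε hε
  set μ := AddCircle.haarAddCircle (T := T) with hμ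
  set C := (eLpNorm f ⊤ μ).toReal with hC
  have hCnn : 0 ≤ C := ENNReal.toReal_nonneg
  obtain ⟨a, ha⟩ : ∃ a : ℤ → ℂ, fourierCoeff f = a := ⟨_, rfl⟩
  simp only [ha] at heig ⊢
  -- summability of a in ℓ²
  have hf2 : MemLp f 2 μ := hf.mono_exponent le_top
  have ha2 : Summable fun k : ℤ => ‖a k‖ ^ 2 := by
    set F := hf2.toLp f with hF
    have hFc : ∀ i : ℤ, fourierCoeff (F : AddCircle T → ℂ) i = a i := by
      intro i
      rw [← ha]
      apply integral_congr_ae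
      filter_upwards [hf2.coeFn_toLp] with t ht
      rw [ht]
    have hmem := lp.memℓp (fourierBasis.repr F)
    rw [memℓp_gen_iff (by norm_num)] at hmem
    have hrpow : ∀ x : ℝ, x ^ ((2:ℝ≥0∞)).toReal = x ^ 2 := by
      intro x
      rw [ENNReal.toReal_ofNat, show ((2:ℝ)) = ((2:ℕ):ℝ) by norm_num, Real.rpow_natCast]
    simpa only [hrpow, fourierBasis_repr, hFc] using hmem
  -- per-row summability of the convolution
  have hconv : ∀ j : ℤ, Summable fun r => a (j - r) * V r := by
    intro j
    have h1 : Summable fun r : ℤ => ‖a (j - r)‖ ^ 2 := by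
      have := (Equiv.summable_iff (Equiv.subLeft j)).mpr ha2
      exact this
    have h2 : Summable fun r : ℤ => ‖a (j - r) * V r‖ := by
      refine Summable.of_nonneg_of_le (fun r => norm_nonneg _) (fun r => ?_)
        ((h1.add hV2).div_const 2)
      rw [norm_mul]
      nlinarith [sq_nonneg (‖a (j - r)‖ - ‖V r‖), norm_nonneg (a (j - r)), norm_nonneg (V r)]
    exact h2.of_norm
  -- choose the cutoff
  set δ := ε ^ 2 / (C ^ 2 + 1) with hδdef
  have hδpos : 0 < δ := by positivity
  have htail := tendsto_tsum_compl_atTop_zero (fun r : ℤ => ‖V r‖ ^ 2)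
  have hev : ∀ᶠ s : Finset ℤ in atTop, (∑' r : {x // x ∉ s}, ‖V (r : ℤ)‖ ^ 2) < δ :=
    htail.eventually_lt_const hδpos
  obtain ⟨s₀, hs₀⟩ := eventually_atTop.mp hev
  set j₀ : ℕ := s₀.sup fun x => x.natAbs with hj₀
  refine ⟨j₀, ?_⟩
  intro m hm k' hk'
  -- the big window S and small window s₁
  set S : Finset ℤ := Finset.Icc (-(m : ℤ) + k') ((m : ℤ) + k') with hS
  set s₁ : Finset ℤ := Finset.Icc (-(j₀ : ℤ)) (j₀ : ℤ) with hs₁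
  have hs₀s₁ : s₀ ⊆ s₁ := by
    intro x hx
    have : x.natAbs ≤ j₀ := Finset.le_sup hx
    rw [hs₁, Finset.mem_Icc]
    omega
  have htail₁ : (∑' r : {x // x ∉ s₁}, ‖V (r : ℤ)‖ ^ 2) < δ := hs₀ s₁ hs₀s₁
  have hs₁S : s₁ ⊆ S := by
    intro x hx
    rw [hs₁, Finset.mem_Icc] at hx
    rw [hS, Finset.mem_Icc]
    rw [abs_le] at hk'
    omega
  -- the truncated tail vector w
  set w : ℤ → ℂ := fun r => if r ∈ S then 0 else V r with hw
  have hwle : ∀ r, ‖w r‖ ^ 2 ≤ ‖V r‖ ^ 2 := by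
    intro r
    rw [hw]
    by_cases h : r ∈ S <;> simp [h, sq_nonneg]
  have hwsum : Summable fun r => ‖w r‖ ^ 2 :=
    Summable.of_nonneg_of_le (fun r => sq_nonneg _) hwle hV2
  obtain ⟨u, hu_hasSum, hu_sum, hu_bound⟩ := multiplier_bound f hf w hwsum
  simp only [ha] at hu_hasSum
  -- identify the bracket with -u (i + k')
  have hbracket : ∀ i : ℤ,
      (∑ r ∈ Finset.Icc (-(m : ℤ)) (m : ℤ), a (i - r) * V (r + k'))
        - (lam + Complex.I * ω * (i + k')) * V (i + k') = -(u (i + k')) := by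
    intro i
    set j : ℤ := i + k' with hj
    have heq1 : (∑ r ∈ Finset.Icc (-(m : ℤ)) (m : ℤ), a (i - r) * V (r + k'))
        = ∑ r ∈ S, a (j - r) * V r := by
      rw [hS, ← Finset.map_add_right_Icc, Finset.sum_map]
      refine Finset.sum_congr rfl fun r _ => ?_
      simp only [addRightEmbedding_apply]
      congr 2
      omega
    have heig' : (∑' r : ℤ, a (j - r) * V r) = (lam + Complex.I * ω * (i + k')) * V (i + k') := by
      have := heig j
      rw [sub_eq_iff_eq_add] at this
      rw [this, hj]
      push_cast
      ring
    have hsplit := Summable.sum_add_tsum_compl (s := S) (hconv j)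
    have htail_eq : (∑' x : (((S : Set ℤ)ᶜ : Set ℤ) : Type), a (j - (x : ℤ)) * V (x : ℤ))
        = ∑' r, a (j - r) * w r := by
      rw [tsum_subtype ((S : Set ℤ)ᶜ) (fun r => a (j - r) * V r)]
      refine tsum_congr fun r => ?_
      by_cases h : r ∈ S
      · simp [Set.indicator, h, hw]
      · simp [Set.indicator, h, hw]
    have hval : u j = ∑' r, a (j - r) * w r := (hu_hasSum j).tsum_eq.symm
    rw [heq1, ← heig']
    rw [← hsplit]
    rw [hval, ← htail_eq]
    ring
  -- final estimate
  have hstep : ∀ i : ℤ,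
      ‖(∑ r ∈ Finset.Icc (-(m : ℤ)) (m : ℤ), a (i - r) * V (r + k'))
        - (lam + Complex.I * ω * (i + k')) * V (i + k')‖ ^ 2 = ‖u (i + k')‖ ^ 2 := by
    intro i
    rw [hbracket i, norm_neg]
  calc ∑ i ∈ Finset.Icc (-(m : ℤ)) (m : ℤ),
        ‖(∑ r ∈ Finset.Icc (-(m : ℤ)) (m : ℤ), a (i - r) * V (r + k'))
          - (lam + Complex.I * ω * (i + k')) * V (i + k')‖ ^ 2
      = ∑ i ∈ Finset.Icc (-(m : ℤ)) (m : ℤ), ‖u (i + k')‖ ^ 2 :=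
        Finset.sum_congr rfl fun i _ => hstep i
    _ = ∑ j ∈ S, ‖u j‖ ^ 2 := by
        rw [hS, ← Finset.map_add_right_Icc, Finset.sum_map]
        simp [addRightEmbedding_apply]
    _ ≤ ∑' j : ℤ, ‖u j‖ ^ 2 := Summable.sum_le_tsum S (fun _ _ => sq_nonneg _) hu_sum
    _ ≤ C ^ 2 * ∑' r : ℤ, ‖w r‖ ^ 2 := hu_bound
    _ ≤ C ^ 2 * δ := by
        apply mul_le_mul_of_nonneg_left _ (sq_nonneg C)
        have hind : (∑' r : ℤ, ‖w r‖ ^ 2) ≤ ∑' r : {x // x ∉ s₁}, ‖V (r : ℤ)‖ ^ 2 := by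
          have h1 := tsum_subtype ((s₁ : Set ℤ)ᶜ) (fun r : ℤ => ‖V r‖ ^ 2)
          have h2 : (∑' r : {x // x ∉ s₁}, ‖V (r : ℤ)‖ ^ 2)
              = ∑' x : (((s₁ : Set ℤ)ᶜ : Set ℤ) : Type), ‖V (x : ℤ)‖ ^ 2 :=
            Equiv.tsum_eq (Equiv.subtypeEquivRight (fun x => by simp))
              (fun x : (((s₁ : Set ℤ)ᶜ : Set ℤ) : Type) => ‖V (x : ℤ)‖ ^ 2)
          rw [h2, h1]
          apply Summable.tsum_le_tsum _ hwsum
          · apply Summable.of_nonneg_of_le (fun r => Set.indicator_nonneg (fun _ _ => sq_nonneg _) _)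
              (fun r => Set.indicator_le_self' (fun _ _ => sq_nonneg _) r) hV2
          · intro r
            by_cases h : r ∈ s₁
            · have : r ∈ S := hs₁S h
              simp [Set.indicator, h, hw, this]
            · simp only [Set.indicator, Set.mem_compl_iff, Finset.coe_sort_coe, Set.mem_setOf_eq]
              simp only [Finset.mem_coe, h, not_false_iff, if_pos]
              exact hwle r
        exact hind.trans htail₁.le
    _ < ε ^ 2 := by
        have h1 : (0:ℝ) < C ^ 2 + 1 := by positivity
        have hε2 : (0:ℝ) < ε ^ 2 := by positivity
        rw [hδdef, mul_div_assoc']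
        rw [div_lt_iff₀ h1]
        nlinarith [sq_nonneg C]
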